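/- Let F be a set of k edges of G (with k ≤ λ). Then the maximum (s,t)-flow value of G − F equals λ − k if and only if there exists an (s,t)-min-cut of G containing all the edges of F. -/

import Mathlib

open Finset

/-- A finite directed multigraph on vertex type `V` with edge type `E`:
each edge `e` has a source `src e` and a target `tgt e`. -/
structure Digraph' (V E : Type) where
  src : E → V
  tgt : E → V

namespace Digraph'

variable {V E : Type} [Fintype V] [DecidableEq V] [Fintype E] [DecidableEq E]

/-- `h : E → ℕ` satisfies flow conservation at every vertex other than `s` and `t`:
the sum over incoming edges equals the sum over outgoing edges. -/
def Conserves (G : Digraph' V E) (s t : V) (h : E → ℕ) : Prop :=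
  ∀ v : V, v ≠ s → v ≠ t →
    ∑ e ∈ univ.filter (fun e => G.tgt e = v), h e =
      ∑ e ∈ univ.filter (fun e => G.src e = v), h e

/-- The value of `h`: the net flow out of `s`. -/
def flowValue (G : Digraph' V E) (s : V) (h : E → ℕ) : ℤ :=
  (∑ e ∈ univ.filter (fun e => G.src e = s), (h e : ℤ)) -
    ∑ e ∈ univ.filter (fun e => G.tgt e = s), (h e : ℤ)

/-- An `(s,t)`-flow of a unit-capacity digraph: a `{0,1}`-valued function on edges
satisfying flow conservation at every vertex other than `s` and `t`. -/
def IsFlow (G : Digraph' V E) (s t : V) (f : E → ℕ) : Prop :=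
  (∀ e, f e ≤ 1) ∧ G.Conserves s t f

/-- One step along an edge not belonging to `F`. -/
def stepAvoid (G : Digraph' V E) (F : Finset E) (u v : V) : Prop :=
  ∃ e, e ∉ F ∧ G.src e = u ∧ G.tgt e = v

/-- Reachability by a directed path using no edge of `F`. -/
def ReachAvoid (G : Digraph' V E) (F : Finset E) : V → V → Prop :=
  Relation.ReflTransGen (G.stepAvoid F)

/-- `C` is an `(s,t)`-cut: after deleting the edges of `C` there is no directed
path from `s` to `t`. -/
def IsCut (G : Digraph' V E) (s t : V) (C : Finset E) : Prop :=
  ¬ G.ReachAvoid C s t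

/-- An `(s,t)`-min-cut: an `(s,t)`-cut of minimum cardinality. -/
def IsMinCut (G : Digraph' V E) (s t : V) (C : Finset E) : Prop :=
  G.IsCut s t C ∧ ∀ C' : Finset E, G.IsCut s t C' → C.card ≤ C'.card

/-- A minimal `(s,t)`-cut: no proper subset of it is an `(s,t)`-cut. -/
def IsMinimalCut (G : Digraph' V E) (s t : V) (C : Finset E) : Prop :=
  G.IsCut s t C ∧ ∀ C' : Finset E, C' ⊂ C → ¬ G.IsCut s t C'

/-- An edge is critical if it belongs to some `(s,t)`-min-cut. -/
def Critical (G : Digraph' V E) (s t : V) (e : E) : Prop :=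
  ∃ C : Finset E, G.IsMinCut s t C ∧ e ∈ C

/-- `m` is the maximum `(s,t)`-flow value of `G − F`, i.e. the largest value of an
`(s,t)`-flow of `G` vanishing on every edge of `F`. -/
def IsMaxFlowValue (G : Digraph' V E) (s t : V) (F : Finset E) (m : ℤ) : Prop :=
  (∃ f, G.IsFlow s t f ∧ (∀ e ∈ F, f e = 0) ∧ G.flowValue s f = m) ∧
    ∀ f, G.IsFlow s t f → (∀ e ∈ F, f e = 0) → G.flowValue s f ≤ m

/-- The residual graph `G_f` of a `{0,1}`-flow `f`: each edge with `f e = 1`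
is reversed, each edge with `f e = 0` is kept as is. -/
def residual (G : Digraph' V E) (f : E → ℕ) : Digraph' V E where
  src e := if f e = 1 then G.tgt e else G.src e
  tgt e := if f e = 1 then G.src e else G.tgt e

end Digraph'

namespace Digraph'

section Aux

variable {V E : Type} [Fintype V] [DecidableEq V] [Fintype E] [DecidableEq E]

@[simp] lemma residual_src (G : Digraph' V E) (f : E → ℕ) (e : E) :
    (G.residual f).src e = if f e = 1 then G.tgt e else G.src e := rfl

@[simp] lemma residual_tgt (G : Digraph' V E) (f : E → ℕ) (e : E) :
    (G.residual f).tgt e = if f e = 1 then G.src e else G.tgt e := rfl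

/-- Net flow out of a vertex. -/
def netOut (G : Digraph' V E) (f : E → ℕ) (v : V) : ℤ :=
  (∑ e ∈ univ.filter (fun e => G.src e = v), (f e : ℤ)) -
    ∑ e ∈ univ.filter (fun e => G.tgt e = v), (f e : ℤ)

lemma flowValue_eq_netOut (G : Digraph' V E) (s : V) (f : E → ℕ) :
    G.flowValue s f = G.netOut f s := rfl

lemma conserves_iff (G : Digraph' V E) (s t : V) (f : E → ℕ) :
    G.Conserves s t f ↔ ∀ v, v ≠ s → v ≠ t → G.netOut f v = 0 := by
  unfold Conserves netOut
  constructor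
  · intro h v hs ht
    rw [sub_eq_zero, ← Nat.cast_sum, ← Nat.cast_sum, Nat.cast_inj]
    exact (h v hs ht).symm
  · intro h v hs ht
    have h2 := h v hs ht
    rw [sub_eq_zero, ← Nat.cast_sum, ← Nat.cast_sum, Nat.cast_inj] at h2
    exact h2.symm

lemma sum_netOut (G : Digraph' V E) (f : E → ℕ) (X : Finset V) :
    ∑ v ∈ X, G.netOut f v =
      (∑ e ∈ univ.filter (fun e => G.src e ∈ X ∧ G.tgt e ∉ X), (f e : ℤ)) -
        ∑ e ∈ univ.filter (fun e => G.tgt e ∈ X ∧ G.src e ∉ X), (f e : ℤ) := by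
  unfold netOut
  rw [Finset.sum_sub_distrib,
    Finset.sum_fiberwise_eq_sum_filter univ X G.src (fun e => (f e : ℤ)),
    Finset.sum_fiberwise_eq_sum_filter univ X G.tgt (fun e => (f e : ℤ)),
    ← Finset.sum_filter_add_sum_filter_not (univ.filter (fun e => G.src e ∈ X))
      (fun e => G.tgt e ∈ X) (fun e => (f e : ℤ)),
    ← Finset.sum_filter_add_sum_filter_not (univ.filter (fun e => G.tgt e ∈ X))
      (fun e => G.src e ∈ X) (fun e => (f e : ℤ)),
    Finset.filter_filter, Finset.filter_filter, Finset.filter_filter, Finset.filter_filter]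
  have hcomm : univ.filter (fun e : E => G.tgt e ∈ X ∧ G.src e ∈ X)
      = univ.filter (fun e : E => G.src e ∈ X ∧ G.tgt e ∈ X) := by
    ext e; simp [and_comm]
  rw [hcomm]
  ring

lemma flowValue_eq_crossing (G : Digraph' V E) (s t : V) (f : E → ℕ)
    (hc : G.Conserves s t f) (X : Finset V) (hs : s ∈ X) (ht : t ∉ X) :
    G.flowValue s f =
      (∑ e ∈ univ.filter (fun e => G.src e ∈ X ∧ G.tgt e ∉ X), (f e : ℤ)) -
        ∑ e ∈ univ.filter (fun e => G.tgt e ∈ X ∧ G.src e ∉ X), (f e : ℤ) := by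
  have h := sum_netOut G f X
  rw [Finset.sum_eq_single_of_mem s hs] at h
  · rw [flowValue_eq_netOut]; exact h
  · intro v hv hvs
    exact (conserves_iff G s t f).1 hc v hvs (fun h' => ht (h' ▸ hv))

/-- Paths in a digraph avoiding a set of edges, as edge lists. -/
def IsPath (H : Digraph' V E) (F : Finset E) : V → List E → V → Prop
  | u, [], v => u = v
  | u, e :: l, v => e ∉ F ∧ H.src e = u ∧ IsPath H F (H.tgt e) l v

@[simp] lemma isPath_nil (H : Digraph' V E) (F : Finset E) (u v : V) :
    IsPath H F u [] v ↔ u = v := Iff.rfl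

@[simp] lemma isPath_cons (H : Digraph' V E) (F : Finset E) (u v : V) (e : E) (l : List E) :
    IsPath H F u (e :: l) v ↔ e ∉ F ∧ H.src e = u ∧ IsPath H F (H.tgt e) l v := Iff.rfl

lemma isPath_concat (H : Digraph' V E) (F : Finset E) :
    ∀ (l : List E) (u w : V), IsPath H F u l w → ∀ (e : E), e ∉ F → H.src e = w →
      IsPath H F u (l ++ [e]) (H.tgt e) := by
  intro l
  induction l with
  | nil =>
    intro u w h e he hw
    exact ⟨he, h ▸ hw, rfl⟩
  | cons a l ih =>
    intro u w h e he hw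
    obtain ⟨ha, hsrc, hrest⟩ := h
    exact ⟨ha, hsrc, ih _ _ hrest e he hw⟩

lemma reach_to_path {H : Digraph' V E} {F : Finset E} {u v : V} (h : H.ReachAvoid F u v) :
    ∃ l, IsPath H F u l v := by
  have h' : Relation.ReflTransGen (H.stepAvoid F) u v := h
  clear h
  induction h' with
  | refl => exact ⟨[], rfl⟩
  | tail hab hbc ih =>
    obtain ⟨l, hl⟩ := ih
    obtain ⟨e, heF, hsrc, htgt⟩ := hbc
    exact ⟨l ++ [e], htgt ▸ isPath_concat H F l _ _ hl e heF hsrc⟩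

lemma isPath_not_mem {H : Digraph' V E} {F : Finset E} :
    ∀ {l : List E} {u v : V}, IsPath H F u l v → ∀ e ∈ l, e ∉ F := by
  intro l
  induction l with
  | nil => intro u v h e he; simp at he
  | cons a l ih =>
    intro u v h e he
    obtain ⟨ha, _, hrest⟩ := h
    rcases List.mem_cons.mp he with rfl | he
    · exact ha
    · exact ih hrest e he

lemma isPath_drop {H : Digraph' V E} {F : Finset E} :
    ∀ (l : List E) (u w v : V), IsPath H F u l w → v ∈ u :: l.map H.tgt →
      ∃ l', IsPath H F v l' w ∧ (v :: l'.map H.tgt) <:+ (u :: l.map H.tgt) := by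
  intro l
  induction l with
  | nil =>
    intro u w v h hv
    simp only [List.map_nil, List.mem_singleton] at hv
    subst hv
    exact ⟨[], h, List.suffix_refl _⟩
  | cons e l ih =>
    intro u w v h hv
    rcases List.mem_cons.mp hv with rfl | hv
    · exact ⟨e :: l, h, List.suffix_refl _⟩
    · obtain ⟨l', hl', hsuf⟩ := ih (H.tgt e) w v h.2.2 hv
      exact ⟨l', hl', hsuf.trans (List.suffix_cons u _)⟩

lemma exists_nodup_path {H : Digraph' V E} {F : Finset E} {w : V} :
    ∀ (n : ℕ) (l : List E) (u : V), l.length ≤ n → IsPath H F u l w →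
      ∃ l', IsPath H F u l' w ∧ (u :: l'.map H.tgt).Nodup := by
  intro n
  induction n with
  | zero =>
    intro l u hlen h
    have hl : l = [] := List.length_eq_zero_iff.mp (Nat.le_zero.mp hlen)
    subst hl
    exact ⟨[], h, by simp⟩
  | succ n ih =>
    intro l u hlen h
    match l with
    | [] => exact ⟨[], h, by simp⟩
    | e :: l =>
      obtain ⟨heF, hsrc, hrest⟩ := h
      have hlen' : l.length ≤ n := by
        simp only [List.length_cons] at hlen; omega
      obtain ⟨l'', h'', hnd''⟩ := ih l (H.tgt e) hlen' hrest
      by_cases hu : u ∈ H.tgt e :: l''.map H.tgt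
      · obtain ⟨l₃, h₃, hsuf⟩ := isPath_drop l'' (H.tgt e) w u h'' hu
        exact ⟨l₃, h₃, List.Nodup.sublist hsuf.sublist hnd''⟩
      · refine ⟨e :: l'', ⟨heF, hsrc, h''⟩, ?_⟩
        simp only [List.map_cons, List.nodup_cons]
        exact ⟨by simpa using hu, by simpa using hnd''⟩

lemma sum_diff_single (s : Finset E) (g₁ g₂ : E → ℤ) (e : E)
    (h : ∀ x, x ≠ e → g₁ x = g₂ x) :
    ∑ x ∈ s, g₁ x - ∑ x ∈ s, g₂ x = if e ∈ s then g₁ e - g₂ e else 0 := by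
  rw [← Finset.sum_sub_distrib]
  by_cases he : e ∈ s
  · rw [if_pos he, Finset.sum_eq_single_of_mem e he]
    intro b _ hb
    rw [h b hb]; ring
  · rw [if_neg he, Finset.sum_eq_zero]
    intro b hb
    rw [h b (fun hbe => he (hbe ▸ hb))]; ring

/-- Flip the flow along a list of edges. -/
def flipFlow (f : E → ℕ) (l : List E) : E → ℕ := fun e => if e ∈ l then 1 - f e else f e

lemma netOut_flip (G : Digraph' V E) (f : E → ℕ) (hf1 : ∀ e, f e ≤ 1) (F : Finset E) (t : V) :
    ∀ (l : List E) (u : V), IsPath (G.residual f) F u l t →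
      (u :: l.map (G.residual f).tgt).Nodup →
      ∀ v, G.netOut (flipFlow f l) v =
        G.netOut f v + (if u = v then 1 else 0) - (if t = v then 1 else 0) := by
  intro l
  induction l with
  | nil =>
    intro u h _ v
    have hut : u = t := h
    have hfl : flipFlow f [] = f := by funext e; simp [flipFlow]
    rw [hfl]
    subst hut
    by_cases hv : u = v <;> simp [hv]
  | cons e l ih =>
    intro u h hnd v
    obtain ⟨heF, hsrc, hrest⟩ := h
    rw [List.map_cons] at hnd
    have hnd1 := List.nodup_cons.mp hnd
    have hnd' : (((G.residual f).tgt e) :: l.map (G.residual f).tgt).Nodup := hnd1.2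
    have hel : e ∉ l := fun hl =>
      (List.nodup_cons.mp hnd').1 (List.mem_map_of_mem hl)
    have hIH := ih ((G.residual f).tgt e) hrest hnd'
    have hflipe : flipFlow f (e :: l) e = 1 - f e := by simp [flipFlow]
    have hflipl : flipFlow f l e = f e := by simp [flipFlow, hel]
    have key : G.netOut (flipFlow f (e :: l)) v - G.netOut (flipFlow f l) v
        = (if G.src e = v then ((1 - f e : ℕ) : ℤ) - (f e : ℤ) else 0)
          - (if G.tgt e = v then ((1 - f e : ℕ) : ℤ) - (f e : ℤ) else 0) := by
      unfold netOut
      rw [sub_sub_sub_comm,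
        sum_diff_single (univ.filter (fun e' => G.src e' = v))
          (fun x => (flipFlow f (e :: l) x : ℤ)) (fun x => (flipFlow f l x : ℤ)) e
          (fun x hx => by simp [flipFlow, List.mem_cons, hx]),
        sum_diff_single (univ.filter (fun e' => G.tgt e' = v))
          (fun x => (flipFlow f (e :: l) x : ℤ)) (fun x => (flipFlow f l x : ℤ)) e
          (fun x hx => by simp [flipFlow, List.mem_cons, hx])]
      simp only [Finset.mem_filter, Finset.mem_univ, true_and, hflipe, hflipl]
    rw [hIH v] at key
    have hfe01 : f e = 0 ∨ f e = 1 := by have := hf1 e; omega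
    rcases hfe01 with hfe | hfe
    · have hs' : G.src e = u := by rw [← hsrc]; simp [residual_src, hfe]
      have ht' : (G.residual f).tgt e = G.tgt e := by simp [residual_tgt, hfe]
      rw [ht', hs'] at key
      split_ifs at key ⊢ <;> omega
    · have hs' : G.tgt e = u := by rw [← hsrc]; simp [residual_src, hfe]
      have ht' : (G.residual f).tgt e = G.src e := by simp [residual_tgt, hfe]
      rw [ht', hs'] at key
      split_ifs at key ⊢ <;> omega

lemma exists_augment (G : Digraph' V E) (s t : V) (hst : s ≠ t) (F : Finset E) (f : E → ℕ)
    (hf : G.IsFlow s t f) (hF0 : ∀ e ∈ F, f e = 0)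
    (h : (G.residual f).ReachAvoid F s t) :
    ∃ f', G.IsFlow s t f' ∧ (∀ e ∈ F, f' e = 0) ∧
      G.flowValue s f' = G.flowValue s f + 1 := by
  obtain ⟨l₀, hl₀⟩ := reach_to_path h
  obtain ⟨l, hl, hnd⟩ := exists_nodup_path l₀.length l₀ s le_rfl hl₀
  have hkey := netOut_flip G f hf.1 F t l s hl hnd
  refine ⟨flipFlow f l, ⟨?_, ?_⟩, ?_, ?_⟩
  · intro e
    by_cases he : e ∈ l
    · simp only [flipFlow, if_pos he]; omega
    · simp only [flipFlow, if_neg he]; exact hf.1 e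
  · rw [conserves_iff]
    intro v hvs hvt
    have hk := hkey v
    rw [if_neg (fun h' => hvs h'.symm), if_neg (fun h' => hvt h'.symm)] at hk
    rw [hk, (conserves_iff G s t f).1 hf.2 v hvs hvt]
    ring
  · intro e he
    have hel : e ∉ l := fun hel => isPath_not_mem hl e hel he
    simp [flipFlow, hel, hF0 e he]
  · rw [flowValue_eq_netOut, flowValue_eq_netOut, hkey s, if_pos rfl,
      if_neg (Ne.symm hst)]
    ring

lemma cut_of_max (G : Digraph' V E) (s t : V) (F : Finset E) (f : E → ℕ)
    (hf : G.IsFlow s t f) (hF0 : ∀ e ∈ F, f e = 0)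
    (hnores : ¬ (G.residual f).ReachAvoid F s t) :
    ∃ C : Finset E, G.IsCut s t C ∧ ((C \ F).card : ℤ) = G.flowValue s f := by
  classical
  set X : Finset V := univ.filter (fun v => (G.residual f).ReachAvoid F s v) with hX
  have hsX : s ∈ X := by
    simp only [hX, Finset.mem_filter, Finset.mem_univ, true_and]
    exact Relation.ReflTransGen.refl
  have htX : t ∉ X := by
    simp only [hX, Finset.mem_filter, Finset.mem_univ, true_and]
    exact hnores
  have hstep : ∀ e, e ∉ F → G.src e ∈ X → f e ≠ 1 → G.tgt e ∈ X := by
    intro e heF hs hfe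
    simp only [hX, Finset.mem_filter, Finset.mem_univ, true_and] at hs ⊢
    exact Relation.ReflTransGen.tail hs ⟨e, heF, by simp [residual_src, hfe],
      by simp [residual_tgt, hfe]⟩
  have hstep' : ∀ e, e ∉ F → G.tgt e ∈ X → f e = 1 → G.src e ∈ X := by
    intro e heF ht' hfe
    simp only [hX, Finset.mem_filter, Finset.mem_univ, true_and] at ht' ⊢
    exact Relation.ReflTransGen.tail ht' ⟨e, heF, by simp [residual_src, hfe],
      by simp [residual_tgt, hfe]⟩
  set C : Finset E := univ.filter (fun e => G.src e ∈ X ∧ G.tgt e ∉ X) with hC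
  have hfwd : ∀ e ∈ C, e ∉ F → f e = 1 := by
    intro e he heF
    simp only [hC, Finset.mem_filter, Finset.mem_univ, true_and] at he
    by_contra hfe
    exact he.2 (hstep e heF he.1 hfe)
  have hbwd : ∀ e, G.tgt e ∈ X → G.src e ∉ X → f e = 0 := by
    intro e ht' hs'
    by_cases heF : e ∈ F
    · exact hF0 e heF
    · by_contra h0
      have hfe : f e = 1 := by have := hf.1 e; omega
      exact hs' (hstep' e heF ht' hfe)
  refine ⟨C, ?_, ?_⟩
  · intro hreach
    have hall : ∀ v, Relation.ReflTransGen (G.stepAvoid C) s v → v ∈ X := by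
      intro v hv
      induction hv with
      | refl => exact hsX
      | tail hab hbc ih =>
        obtain ⟨e, heC, hsrc, htgt⟩ := hbc
        by_contra htv
        apply heC
        simp only [hC, Finset.mem_filter, Finset.mem_univ, true_and]
        exact ⟨by rw [hsrc]; exact ih, by rw [htgt]; exact htv⟩
    exact htX (hall t hreach)
  · have hval := flowValue_eq_crossing G s t f hf.2 X hsX htX
    rw [hval]
    have hb : ∑ e ∈ univ.filter (fun e => G.tgt e ∈ X ∧ G.src e ∉ X), (f e : ℤ) = 0 := by
      apply Finset.sum_eq_zero
      intro e he
      simp only [Finset.mem_filter, Finset.mem_univ, true_and] at he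
      rw [hbwd e he.1 he.2]; rfl
    rw [hb, sub_zero]
    have hones : ∀ e ∈ C \ F, (f e : ℤ) = 1 := by
      intro e he
      rw [Finset.mem_sdiff] at he
      rw [hfwd e he.1 he.2]; rfl
    calc ((C \ F).card : ℤ) = ∑ e ∈ C \ F, (1 : ℤ) := by simp
      _ = ∑ e ∈ C \ F, (f e : ℤ) := (Finset.sum_congr rfl hones).symm
      _ = ∑ e ∈ C, (f e : ℤ) := Finset.sum_subset Finset.sdiff_subset (fun x hx hnx => by
            have hxF : x ∈ F := by
              by_contra hh; exact hnx (Finset.mem_sdiff.mpr ⟨hx, hh⟩)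
            simp [hF0 x hxF])
      _ = ∑ e ∈ univ.filter (fun e => G.src e ∈ X ∧ G.tgt e ∉ X), (f e : ℤ) := by rw [hC]

lemma val_le_cut (G : Digraph' V E) (s t : V) (F : Finset E) (f : E → ℕ)
    (hf : G.IsFlow s t f) (hF0 : ∀ e ∈ F, f e = 0) (C : Finset E) (hC : G.IsCut s t C) :
    G.flowValue s f ≤ ((C \ F).card : ℤ) := by
  classical
  set X : Finset V := univ.filter (fun v => G.ReachAvoid C s v) with hX
  have hsX : s ∈ X := by
    simp only [hX, Finset.mem_filter, Finset.mem_univ, true_and]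
    exact Relation.ReflTransGen.refl
  have htX : t ∉ X := by
    simp only [hX, Finset.mem_filter, Finset.mem_univ, true_and]
    exact hC
  have hfwd : ∀ e, G.src e ∈ X → G.tgt e ∉ X → e ∈ C := by
    intro e hs' ht'
    by_contra heC
    apply ht'
    simp only [hX, Finset.mem_filter, Finset.mem_univ, true_and] at hs' ⊢
    exact Relation.ReflTransGen.tail hs' ⟨e, heC, rfl, rfl⟩
  rw [flowValue_eq_crossing G s t f hf.2 X hsX htX]
  have h1 : (0 : ℤ) ≤ ∑ e ∈ univ.filter (fun e => G.tgt e ∈ X ∧ G.src e ∉ X), (f e : ℤ) :=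
    Finset.sum_nonneg (fun e _ => Int.natCast_nonneg _)
  have h2 : ∑ e ∈ univ.filter (fun e => G.src e ∈ X ∧ G.tgt e ∉ X), (f e : ℤ)
      ≤ ((C \ F).card : ℤ) := by
    set A := univ.filter (fun e => G.src e ∈ X ∧ G.tgt e ∉ X) with hA
    have hsub : A \ F ⊆ C \ F := by
      intro e he
      rw [Finset.mem_sdiff] at he ⊢
      refine ⟨?_, he.2⟩
      have he1 := he.1
      simp only [hA, Finset.mem_filter, Finset.mem_univ, true_and] at he1
      exact hfwd e he1.1 he1.2
    calc ∑ e ∈ A, (f e : ℤ) = ∑ e ∈ A \ F, (f e : ℤ) :=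
          (Finset.sum_subset Finset.sdiff_subset (fun x hx hnx => by
            have hxF : x ∈ F := by
              by_contra hh; exact hnx (Finset.mem_sdiff.mpr ⟨hx, hh⟩)
            simp [hF0 x hxF])).symm
      _ ≤ ∑ e ∈ A \ F, (1 : ℤ) := Finset.sum_le_sum (fun e _ => by exact_mod_cast hf.1 e)
      _ = ((A \ F).card : ℤ) := by simp
      _ ≤ ((C \ F).card : ℤ) := by exact_mod_cast Finset.card_le_card hsub
  linarith

lemma zero_flow (G : Digraph' V E) (s t : V) :
    G.IsFlow s t (fun _ => 0) ∧ G.flowValue s (fun _ => 0) = 0 := by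
  refine ⟨⟨fun e => by norm_num, fun v _ _ => by simp⟩, by simp [flowValue]⟩

end Aux

end Digraph'
/-- Let `F` be a set of `k ≤ λ` edges of `G`. Then the maximum
`(s,t)`-flow value of `G − F` equals `λ − k` iff some `(s,t)`-min-cut of `G` contains
all the edges of `F`. -/
theorem stmt13 {V E : Type} [Fintype V] [DecidableEq V] [Fintype E] [DecidableEq E]
    (G : Digraph' V E) (s t : V) (hst : s ≠ t)
    (lam k : ℕ) (hmax : G.IsMaxFlowValue s t ∅ lam)
    (F : Finset E) (hF : F.card = k) (hk : k ≤ lam) :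
    G.IsMaxFlowValue s t F ((lam : ℤ) - k) ↔
      ∃ C : Finset E, G.IsMinCut s t C ∧ F ⊆ C := by
  classical
  obtain ⟨⟨f₀, hf₀, -, hval₀⟩, hub⟩ := hmax
  have hnores₀ : ¬ (G.residual f₀).ReachAvoid ∅ s t := by
    intro h
    obtain ⟨f', hf', -, hval'⟩ := G.exists_augment s t hst ∅ f₀ hf₀ (by simp) h
    have hle := hub f' hf' (by simp)
    omega
  obtain ⟨C₀, hC₀cut, hC₀card⟩ := G.cut_of_max s t ∅ f₀ hf₀ (by simp) hnores₀
  rw [Finset.sdiff_empty, hval₀] at hC₀card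
  have hlb : ∀ C' : Finset E, G.IsCut s t C' → (lam : ℤ) ≤ C'.card := by
    intro C' h'
    have hle := G.val_le_cut s t ∅ f₀ hf₀ (by simp) C' h'
    rw [Finset.sdiff_empty, hval₀] at hle
    exact hle
  have hC₀lam : C₀.card = lam := by exact_mod_cast hC₀card
  constructor
  · rintro ⟨⟨g, hg, hgF, hgval⟩, hgub⟩
    have hnores : ¬ (G.residual g).ReachAvoid F s t := by
      intro h
      obtain ⟨f', hf', hf'F, hval'⟩ := G.exists_augment s t hst F g hg hgF h
      have hle := hgub f' hf' hf'F
      omega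
    obtain ⟨C, hCcut, hCcard⟩ := G.cut_of_max s t F g hg hgF hnores
    rw [hgval] at hCcard
    have h1 : (C \ F).card + (C ∩ F).card = C.card := Finset.card_sdiff_add_card_inter C F
    have h2 : (C ∩ F).card ≤ k := hF ▸ Finset.card_le_card Finset.inter_subset_right
    have h3 : (lam : ℤ) ≤ C.card := hlb C hCcut
    have h5 : (C ∩ F).card = k := by omega
    have hFC : F ⊆ C := by
      have hCF : C ∩ F = F :=
        Finset.eq_of_subset_of_card_le Finset.inter_subset_right (by rw [h5, hF])
      exact Finset.inter_eq_right.mp hCF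
    refine ⟨C, ⟨hCcut, fun C' hC' => ?_⟩, hFC⟩
    have h6 := hlb C' hC'
    omega
  · rintro ⟨C, ⟨hCcut, hCmin⟩, hFC⟩
    have h6 : (lam : ℤ) ≤ C.card := hlb C hCcut
    have h7 : C.card ≤ lam := hC₀lam ▸ hCmin C₀ hC₀cut
    have hClam : C.card = lam := by omega
    have hup : ∀ f, G.IsFlow s t f → (∀ e ∈ F, f e = 0) →
        G.flowValue s f ≤ (lam : ℤ) - k := by
      intro f hf hfF
      have hle := G.val_le_cut s t F f hf hfF C hCcut
      have hcard : (C \ F).card = lam - k := by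
        rw [Finset.card_sdiff_of_subset hFC, hClam, hF]
      rw [hcard] at hle
      omega
    have hPm := Nat.findGreatest_spec (P := fun n => ∃ f, G.IsFlow s t f ∧
        (∀ e ∈ F, f e = 0) ∧ G.flowValue s f = (n : ℤ)) (m := 0) (Nat.zero_le lam)
      ⟨fun _ => 0, (G.zero_flow s t).1, fun _ _ => rfl, by simp [(G.zero_flow s t).2]⟩
    have hPm2 : ∃ f, G.IsFlow s t f ∧ (∀ e ∈ F, f e = 0) ∧
        G.flowValue s f = ((Nat.findGreatest (fun n => ∃ f, G.IsFlow s t f ∧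
          (∀ e ∈ F, f e = 0) ∧ G.flowValue s f = (n : ℤ)) lam : ℕ) : ℤ) := hPm
    clear hPm
    obtain ⟨g, hg, hgF, hgval⟩ := hPm2
    have hkey : ∀ n : ℕ, n ≤ lam → (∃ f, G.IsFlow s t f ∧ (∀ e ∈ F, f e = 0) ∧
        G.flowValue s f = (n : ℤ)) → (n : ℤ) ≤ G.flowValue s g := by
      intro n hn hPn
      rw [hgval]
      exact_mod_cast Nat.le_findGreatest hn hPn
    have hg0 : 0 ≤ G.flowValue s g := by rw [hgval]; exact Int.natCast_nonneg _
    clear hgval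
    have hgmax : ∀ f, G.IsFlow s t f → (∀ e ∈ F, f e = 0) →
        G.flowValue s f ≤ G.flowValue s g := by
      intro f hf hfF
      rcases le_or_gt (G.flowValue s f) 0 with hl0 | hl0
      · exact hl0.trans hg0
      · have hble := hup f hf hfF
        have hnb : (G.flowValue s f).toNat ≤ lam := by omega
        have hle := hkey (G.flowValue s f).toNat hnb ⟨f, hf, hfF, by omega⟩
        omega
    have hnores : ¬ (G.residual g).ReachAvoid F s t := by
      intro h
      obtain ⟨f', hf', hf'F, hval'⟩ := G.exists_augment s t hst F g hg hgF h
      have hle := hgmax f' hf' hf'F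
      omega
    obtain ⟨C', hC'cut, hC'card⟩ := G.cut_of_max s t F g hg hgF hnores
    have h1 : (C' \ F).card + (C' ∩ F).card = C'.card := Finset.card_sdiff_add_card_inter C' F
    have h2 : (C' ∩ F).card ≤ k := hF ▸ Finset.card_le_card Finset.inter_subset_right
    have h3 : (lam : ℤ) ≤ C'.card := hlb C' hC'cut
    have hgle := hup g hg hgF
    exact ⟨⟨g, hg, hgF, by omega⟩, hup⟩
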